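/- For every pair of positive integers k and p, every family of more than (p−1)^k · k! distinct k-element sets contains a p-sunflower, i.e., p sets whose pairwise intersections are all equal to the same set. -/

import Mathlib

open Finset

private theorem sun_aux {α : Type*} [DecidableEq α] :
    ∀ k p : ℕ, 0 < p → ∀ F : Finset (Finset α), (∀ e ∈ F, e.card = k) →
      (p - 1) ^ k * Nat.factorial k < F.card →
      ∃ S ⊆ F, S.card = p ∧ ∃ C : Finset α,
        ∀ e ∈ S, ∀ f ∈ S, e ≠ f → e ∩ f = C := by
  intro k
  induction k with
  | zero =>
    intro p hp F hunif hcard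
    simp only [pow_zero, Nat.factorial_zero, one_mul] at hcard
    -- F ⊆ {∅}, so card ≤ 1, contradiction
    have hF : F ⊆ {(∅ : Finset α)} := by
      intro e he
      simp only [mem_singleton]
      exact card_eq_zero.mp (hunif e he)
    have := card_le_card hF
    simp at this
    omega
  | succ k ih =>
    intro p hp F hunif hcard
    by_cases hA : ∃ S ⊆ F, S.card = p ∧ ∀ e ∈ S, ∀ f ∈ S, e ≠ f → e ∩ f = (∅ : Finset α)
    · obtain ⟨S, hSF, hScard, hSdisj⟩ := hA
      exact ⟨S, hSF, hScard, ∅, hSdisj⟩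
    -- maximal pairwise disjoint subfamily
    push_neg at hA
    have hPne : (F.powerset.filter fun S => ∀ e ∈ S, ∀ f ∈ S, e ≠ f → e ∩ f = (∅ : Finset α)).Nonempty := by
      refine ⟨∅, ?_⟩
      simp
    obtain ⟨M, hMmem, hMmax⟩ := exists_max_image _ card hPne
    rw [mem_filter, mem_powerset] at hMmem
    obtain ⟨hMF, hMdisj⟩ := hMmem
    -- M.card ≤ p - 1
    have hMlt : M.card < p := by
      by_contra h
      push_neg at h
      obtain ⟨S, hSM, hScard⟩ := exists_subset_card_eq (s := M) h
      obtain ⟨e, he, f, hf, hef, hne⟩ := hA S (hSM.trans hMF) hScard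
      exact (nonempty_iff_ne_empty.mp hne) (hMdisj e (hSM he) f (hSM hf) hef)
    -- every member of F meets some member of M
    have hmeet : ∀ e ∈ F, ∃ m ∈ M, (e ∩ m).Nonempty := by
      intro e he
      by_contra h
      push_neg at h
      have hdis : ∀ m ∈ M, e ∩ m = ∅ := fun m hm =>
        h m hm
      have heM : e ∉ M := by
        intro heM
        have h1 := hdis e heM
        rw [inter_self] at h1
        have h2 := hunif e he
        rw [h1, card_empty] at h2
        omega
      have hins : insert e M ∈ F.powerset.filter
          fun S => ∀ a ∈ S, ∀ b ∈ S, a ≠ b → a ∩ b = (∅ : Finset α) := by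
        rw [mem_filter, mem_powerset]
        constructor
        · exact insert_subset he hMF
        · intro a ha b hb hab
          rcases mem_insert.mp ha with ha' | ha'
          · subst ha'
            rcases mem_insert.mp hb with hb' | hb'
            · subst hb'; exact absurd rfl hab
            · exact hdis b hb'
          · rcases mem_insert.mp hb with hb' | hb'
            · subst hb'; rw [inter_comm]; exact hdis a ha'
            · exact hMdisj a ha' b hb' hab
      have := hMmax _ hins
      rw [card_insert_of_notMem heM] at this
      omega
    set Y := M.sup id with hY
    have hmeetY : ∀ e ∈ F, ∃ y ∈ Y, y ∈ e := by
      intro e he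
      obtain ⟨m, hm, x, hx⟩ := hmeet e he
      rw [mem_inter] at hx
      exact ⟨x, mem_sup.mpr ⟨m, hm, hx.2⟩, hx.1⟩
    have hYcard : Y.card ≤ (p - 1) * (k + 1) := by
      calc Y.card ≤ ∑ m ∈ M, (id m).card := by
            rw [hY, sup_eq_biUnion]; exact card_biUnion_le
        _ = ∑ m ∈ M, (k + 1) := by
            apply Finset.sum_congr rfl
            intro m hm
            exact hunif m (hMF hm)
        _ = M.card * (k + 1) := by rw [sum_const, smul_eq_mul]
        _ ≤ (p - 1) * (k + 1) := by
            apply Nat.mul_le_mul_right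
            omega
    -- counting
    have hcount : F.card ≤ ∑ y ∈ Y, (F.filter fun e => y ∈ e).card := by
      calc F.card ≤ (Y.biUnion fun y => F.filter fun e => y ∈ e).card := by
            apply card_le_card
            intro e he
            rw [mem_biUnion]
            obtain ⟨y, hy, hye⟩ := hmeetY e he
            exact ⟨y, hy, mem_filter.mpr ⟨he, hye⟩⟩
        _ ≤ _ := card_biUnion_le
    have hy : ∃ y ∈ Y, (p - 1) ^ k * Nat.factorial k < (F.filter fun e => y ∈ e).card := by
      by_contra h
      push_neg at h
      have hsum : ∑ y ∈ Y, (F.filter fun e => y ∈ e).card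
          ≤ Y.card * ((p - 1) ^ k * Nat.factorial k) := by
        calc ∑ y ∈ Y, (F.filter fun e => y ∈ e).card
            ≤ ∑ y ∈ Y, (p - 1) ^ k * Nat.factorial k :=
              Finset.sum_le_sum h
          _ = Y.card * ((p - 1) ^ k * Nat.factorial k) := by
              rw [sum_const, smul_eq_mul]
      have : F.card ≤ (p - 1) ^ (k + 1) * Nat.factorial (k + 1) := by
        calc F.card ≤ Y.card * ((p - 1) ^ k * Nat.factorial k) := le_trans hcount hsum
          _ ≤ ((p - 1) * (k + 1)) * ((p - 1) ^ k * Nat.factorial k) :=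
              Nat.mul_le_mul_right _ hYcard
          _ = (p - 1) ^ (k + 1) * Nat.factorial (k + 1) := by
              rw [pow_succ, Nat.factorial_succ]
              ring
      omega
    obtain ⟨y, _, hycount⟩ := hy
    set G := F.filter fun e => y ∈ e with hG
    have hGy : ∀ e ∈ G, y ∈ e := fun e he => (mem_filter.mp he).2
    have hGF : G ⊆ F := filter_subset _ _
    set F' := G.image fun e => e.erase y with hF'
    have hinj : Set.InjOn (fun e : Finset α => e.erase y) ↑G := by
      intro a ha b hb hab
      have hab' : a.erase y = b.erase y := hab
      have : insert y (a.erase y) = insert y (b.erase y) := by rw [hab']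
      rwa [insert_erase (hGy a ha), insert_erase (hGy b hb)] at this
    have hF'card : F'.card = G.card := card_image_of_injOn hinj
    have hF'unif : ∀ e ∈ F', e.card = k := by
      intro e he
      obtain ⟨a, ha, rfl⟩ := mem_image.mp he
      rw [card_erase_of_mem (hGy a ha), hunif a (hGF ha)]
      omega

    have hF'lt : (p - 1) ^ k * Nat.factorial k < F'.card := by
      rw [hF'card]; exact hycount
    obtain ⟨S', hS'F', hS'card, C', hC'⟩ := ih p hp F' hF'unif hF'lt
    have hyS' : ∀ s ∈ S', y ∉ s := by
      intro s hs
      obtain ⟨a, _, rfl⟩ := mem_image.mp (hS'F' hs)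
      exact notMem_erase y a
    refine ⟨S'.image (insert y ·), ?_, ?_, insert y C', ?_⟩
    · intro e he
      obtain ⟨s, hs, rfl⟩ := mem_image.mp he
      obtain ⟨a, ha, rfl⟩ := mem_image.mp (hS'F' hs)
      rw [insert_erase (hGy a ha)]
      exact hGF ha
    · rw [card_image_of_injOn, hS'card]
      intro a ha b hb hab
      have hab' : insert y a = insert y b := hab
      have : (insert y a).erase y = (insert y b).erase y := by rw [hab']
      rwa [erase_insert (hyS' a ha), erase_insert (hyS' b hb)] at this
    · intro e he f hf hef
      obtain ⟨a, ha, rfl⟩ := mem_image.mp he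
      obtain ⟨b, hb, rfl⟩ := mem_image.mp hf
      have hab : a ≠ b := fun h => hef (by rw [h])
      have hI : insert y a ∩ insert y b = insert y (a ∩ b) := by
        ext x
        simp only [mem_inter, mem_insert]
        tauto
      rw [hI, hC' a ha b hb hab]

/-- Erdős–Rado sunflower lemma: For positive integers k and p, every
family of more than (p−1)^k·k! distinct k-element sets contains a p-sunflower: p sets
whose pairwise intersections all equal the same core. -/
theorem stmt_17 {α : Type*} [DecidableEq α] (k p : ℕ) (hk : 0 < k) (hp : 0 < p)
    (F : Finset (Finset α)) (hunif : ∀ e ∈ F, e.card = k)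
    (hcard : (p - 1) ^ k * Nat.factorial k < F.card) :
    ∃ S ⊆ F, S.card = p ∧ ∃ C : Finset α,
      ∀ e ∈ S, ∀ f ∈ S, e ≠ f → e ∩ f = C := by
  exact sun_aux k p hp F hunif hcard
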